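/- For all natural numbers 1 ≤ ℓ ≤ k, the identity ∑_{j=ℓ}^{k} (-1)^{j-ℓ} C(k,j) C(j-1,ℓ-1) 2^j = 1 + (-1)^{k+1} ∑_{h=0}^{ℓ-1} C(k,h) (-2)^h holds in the integers. -/

import Mathlib

lemma neg_two_sum (n : ℕ) :
    ∑ i ∈ Finset.range (n + 1), (n.choose i : ℤ) * (-2) ^ i = (-1) ^ n := by
  have := add_pow (-2 : ℤ) 1 n
  simp only [one_pow, mul_one] at this
  rw [show ((-2 : ℤ) + 1) = -1 by ring] at this
  rw [this]
  exact Finset.sum_congr rfl fun i _ => by ring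

lemma vand (m k : ℕ) (h : m ≤ k) :
    ∑ i ∈ Finset.Icc m k, (-1 : ℤ) ^ (i - m) * (k.choose i : ℤ) * (i.choose m : ℤ) * 2 ^ i
      = (-1) ^ (k - m) * (k.choose m : ℤ) * 2 ^ m := by
  have hIcc : Finset.Icc m k = (Finset.Icc 0 (k - m)).map (addLeftEmbedding m) := by
    rw [Finset.map_add_left_Icc]
    congr 1 <;> omega
  have hr : Finset.Icc 0 (k - m) = Finset.range (k - m + 1) := by
    ext x; simp [Nat.lt_succ_iff]
  rw [hIcc, Finset.sum_map, hr]
  have key : ∀ d ∈ Finset.range (k - m + 1),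
      (-1 : ℤ) ^ (addLeftEmbedding m d - m) * (k.choose (addLeftEmbedding m d) : ℤ)
          * ((addLeftEmbedding m d).choose m : ℤ) * 2 ^ (addLeftEmbedding m d)
        = ((k.choose m : ℤ) * 2 ^ m) * (((k - m).choose d : ℤ) * (-2) ^ d) := by
    intro d hd
    simp only [Finset.mem_range] at hd
    have hadd : addLeftEmbedding m d = m + d := rfl
    rw [hadd]
    have h1 : k.choose (m + d) * (m + d).choose m = k.choose m * (k - m).choose d := by
      have := Nat.choose_mul (n := k) (show m ≤ m + d by omega)
      simpa using this
    have h1' : (k.choose (m + d) : ℤ) * ((m + d).choose m : ℤ)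
        = (k.choose m : ℤ) * ((k - m).choose d : ℤ) := by exact_mod_cast h1
    have he : m + d - m = d := by omega
    rw [he]
    calc (-1 : ℤ) ^ d * (k.choose (m + d) : ℤ) * ((m + d).choose m : ℤ) * 2 ^ (m + d)
        = ((k.choose (m + d) : ℤ) * ((m + d).choose m : ℤ)) * ((-1) ^ d * 2 ^ (m + d)) := by ring
      _ = ((k.choose m : ℤ) * ((k - m).choose d : ℤ)) * ((-1) ^ d * 2 ^ (m + d)) := by rw [h1']
      _ = ((k.choose m : ℤ) * 2 ^ m) * (((k - m).choose d : ℤ) * (-2) ^ d) := by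
          rw [pow_add, neg_pow (2 : ℤ)]; ring
  rw [Finset.sum_congr rfl key, ← Finset.mul_sum, neg_two_sum]
  ring

lemma tele (l k : ℕ) (hl : 1 ≤ l) :
    ∑ h ∈ Finset.range l, ((k + 1).choose h : ℤ) * (-2) ^ h
      + ∑ h ∈ Finset.range l, (k.choose h : ℤ) * (-2) ^ h
      = (-1) ^ (l + 1) * (k.choose (l - 1) : ℤ) * 2 ^ l := by
  induction l, hl using Nat.le_induction with
  | base => simp
  | succ l hl ih =>
    rw [Finset.sum_range_succ, Finset.sum_range_succ]
    have hc : ((k + 1).choose l : ℤ) = (k.choose (l - 1) : ℤ) + (k.choose l : ℤ) := by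
      have : (k + 1).choose l = k.choose (l - 1) + k.choose l := by
        rw [show l = (l - 1) + 1 by omega, Nat.choose_succ_succ]
        simp
      exact_mod_cast this
    have he : l + 1 - 1 = l := by omega
    rw [he, hc]
    have hsub : ∑ h ∈ Finset.range l, ((k + 1).choose h : ℤ) * (-2) ^ h
        = (-1) ^ (l + 1) * (k.choose (l - 1) : ℤ) * 2 ^ l
          - ∑ h ∈ Finset.range l, (k.choose h : ℤ) * (-2) ^ h := by linarith [ih]
    rw [hsub]
    have hp : ((-2 : ℤ)) ^ l = (-1) ^ l * 2 ^ l := by rw [neg_pow]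
    have hp1 : ((-1 : ℤ)) ^ (l + 1) = -(-1) ^ l := by rw [pow_succ]; ring
    have hp2 : ((-1 : ℤ)) ^ (l + 1 + 1) = (-1) ^ l := by rw [pow_succ, pow_succ]; ring
    rw [hp, hp1, hp2, pow_succ]
    ring

theorem stmt_11 (l k : ℕ) (hl : 1 ≤ l) (hk : l ≤ k) :
    ∑ j ∈ Finset.Icc l k,
        (-1 : ℤ) ^ (j - l) * (k.choose j : ℤ) * ((j - 1).choose (l - 1) : ℤ) * 2 ^ j
      = 1 + (-1) ^ (k + 1) * ∑ h ∈ Finset.range l, (k.choose h : ℤ) * (-2) ^ h := by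
  induction k, hk using Nat.le_induction with
  | base =>
    rw [Finset.Icc_self, Finset.sum_singleton]
    have hA : ∑ h ∈ Finset.range l, (l.choose h : ℤ) * (-2) ^ h
        = (-1) ^ l - (-2) ^ l := by
      have := neg_two_sum l
      rw [Finset.sum_range_succ] at this
      simp only [Nat.choose_self, Nat.cast_one, one_mul] at this
      linarith
    rw [hA]
    simp only [Nat.sub_self, Nat.choose_self, Nat.cast_one, pow_zero]
    have hp : ((-2 : ℤ)) ^ l = (-1) ^ l * 2 ^ l := by rw [neg_pow]
    have hp1 : ((-1 : ℤ)) ^ (l + 1) = -(-1) ^ l := by rw [pow_succ]; ring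
    have hp2 : ((-1 : ℤ)) ^ l * (-1) ^ l = 1 := by
      rw [← pow_add]; exact Even.neg_one_pow ⟨l, rfl⟩
    rw [hp, hp1]
    linear_combination (1 - 2 ^ l) * hp2
  | succ k hk ih =>
    -- split Pascal
    have hsplit : ∑ j ∈ Finset.Icc l (k + 1),
        (-1 : ℤ) ^ (j - l) * ((k + 1).choose j : ℤ) * ((j - 1).choose (l - 1) : ℤ) * 2 ^ j
      = (∑ j ∈ Finset.Icc l (k + 1),
          (-1 : ℤ) ^ (j - l) * (k.choose j : ℤ) * ((j - 1).choose (l - 1) : ℤ) * 2 ^ j)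
        + ∑ j ∈ Finset.Icc l (k + 1),
          (-1 : ℤ) ^ (j - l) * (k.choose (j - 1) : ℤ) * ((j - 1).choose (l - 1) : ℤ) * 2 ^ j := by
      rw [← Finset.sum_add_distrib]
      refine Finset.sum_congr rfl fun j hj => ?_
      simp only [Finset.mem_Icc] at hj
      have hc : (k + 1).choose j = k.choose j + k.choose (j - 1) := by
        rw [show j = (j - 1) + 1 by omega, Nat.choose_succ_succ']
        simp [Nat.add_comm]
      rw [hc]
      push_cast
      ring
    -- first sum = old sum
    have h1 : ∑ j ∈ Finset.Icc l (k + 1),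
          (-1 : ℤ) ^ (j - l) * (k.choose j : ℤ) * ((j - 1).choose (l - 1) : ℤ) * 2 ^ j
        = ∑ j ∈ Finset.Icc l k,
          (-1 : ℤ) ^ (j - l) * (k.choose j : ℤ) * ((j - 1).choose (l - 1) : ℤ) * 2 ^ j := by
      rw [Finset.sum_Icc_succ_top (by omega)]
      simp
    -- second sum via vand
    have h2 : ∑ j ∈ Finset.Icc l (k + 1),
          (-1 : ℤ) ^ (j - l) * (k.choose (j - 1) : ℤ) * ((j - 1).choose (l - 1) : ℤ) * 2 ^ j
        = 2 * ((-1) ^ (k - (l - 1)) * (k.choose (l - 1) : ℤ) * 2 ^ (l - 1)) := by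
      have hIcc : Finset.Icc l (k + 1) = (Finset.Icc (l - 1) k).map (addLeftEmbedding 1) := by
        rw [Finset.map_add_left_Icc]
        congr 1 <;> omega
      rw [hIcc, Finset.sum_map, ← vand (l - 1) k (by omega), Finset.mul_sum]
      refine Finset.sum_congr rfl fun i hi => ?_
      simp only [Finset.mem_Icc] at hi
      have hadd : addLeftEmbedding 1 i = 1 + i := rfl
      rw [hadd]
      have e1 : 1 + i - l = i - (l - 1) := by omega
      have e2 : 1 + i - 1 = i := by omega
      rw [e1, e2, pow_add]
      ring
    rw [hsplit, h1, h2, ih]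
    -- now algebra with tele
    have ht := tele l k hl
    have hA : ∑ h ∈ Finset.range l, ((k + 1).choose h : ℤ) * (-2) ^ h
        = (-1) ^ (l + 1) * (k.choose (l - 1) : ℤ) * 2 ^ l
          - ∑ h ∈ Finset.range l, (k.choose h : ℤ) * (-2) ^ h := by linarith
    rw [hA]
    have hsign : (2 : ℤ) * ((-1) ^ (k - (l - 1)) * (k.choose (l - 1) : ℤ) * 2 ^ (l - 1))
        = (-1) ^ (k + l + 1) * (k.choose (l - 1) : ℤ) * 2 ^ l := by
      have e3 : k + l + 1 = (k - (l - 1)) + 2 * l := by omega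
      have e5 : (2 : ℤ) ^ l = 2 ^ (l - 1) * 2 := by
        rw [← pow_succ]
        congr 1
        omega
      rw [e3, pow_add, pow_mul, e5]
      ring
    rw [hsign]
    have hp1 : ((-1 : ℤ)) ^ (k + 1 + 1) = -(-1) ^ (k + 1) := by rw [pow_succ]; ring
    have hp2 : ((-1 : ℤ)) ^ (k + l + 1) = (-1) ^ (k + 1) * (-1) ^ l := by
      rw [show k + l + 1 = (k + 1) + l by omega, pow_add]
    have hp3 : ((-1 : ℤ)) ^ (l + 1) = -(-1) ^ l := by rw [pow_succ]; ring
    rw [hp1, hp2, hp3]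
    ring
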